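/- Lemma 3.2(e): for every α ∈ (0,1), every partition 0 = t_0 < ⋯ < t_N = T, every β ∈ (0,1), and every 1 ≤ n ≤ N, one has Σ_{j=1}^{n} P^{n,j}_α · t_j^{β−α} ≤ (Γ(1+β−α)/Γ(1+β)) · t_n^β. -/

import Mathlib

open Finset

/-- The kernel `k_β(s) = s^(β-1)/Γ(β)`. -/
noncomputable def kker (β s : ℝ) : ℝ := s ^ (β - 1) / Real.Gamma β

/-- The discrete L1 kernels `K^{n,j}_{1-α}`. -/
noncomputable def Kd (α : ℝ) (t : ℕ → ℝ) (n j : ℕ) : ℝ :=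
  (kker (2 - α) (t n - t (j - 1)) - kker (2 - α) (t n - t j)) / (t j - t (j - 1))

/-- The complementary discrete kernels `P^{n,i}_α`, defined by downward recursion. -/
noncomputable def Pd (α : ℝ) (t : ℕ → ℝ) (n i : ℕ) : ℝ :=
  if i = n then 1 / Kd α t n n
  else (1 / Kd α t i i) *
    ∑ j ∈ (Finset.Ioc i n).attach,
      Pd α t n j.1 * (Kd α t j.1 (i + 1) - Kd α t j.1 i)
termination_by n - i
decreasing_by
  have h := Finset.mem_Ioc.mp j.2
  omega

namespace CKWPB

open intervalIntegral MeasureTheory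

lemma real_beta {b c : ℝ} (hb : 0 < b) (hc : 0 < c) :
    ∫ s in (0:ℝ)..1, s ^ (b - 1) * (1 - s) ^ (c - 1)
      = Real.Gamma b * Real.Gamma c / Real.Gamma (b + c) := by
  have h := Complex.Gamma_mul_Gamma_eq_betaIntegral
    (s := (b:ℂ)) (t := (c:ℂ)) (by simpa using hb) (by simpa using hc)
  have hint : Complex.betaIntegral (b:ℂ) (c:ℂ)
      = ((∫ s in (0:ℝ)..1, s ^ (b - 1) * (1 - s) ^ (c - 1) : ℝ) : ℂ) := by
    rw [Complex.betaIntegral, ← intervalIntegral.integral_ofReal]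
    refine intervalIntegral.integral_congr fun x hx => ?_
    rw [Set.uIcc_of_le (by norm_num : (0:ℝ) ≤ 1)] at hx
    obtain ⟨hx0, hx1⟩ := hx
    rw [show ((b:ℂ) - 1) = ((b - 1 : ℝ) : ℂ) by push_cast; ring,
        show ((1:ℂ) - (x:ℂ)) = ((1 - x : ℝ) : ℂ) by push_cast; ring,
        show ((c:ℂ) - 1) = ((c - 1 : ℝ) : ℂ) by push_cast; ring,
        ← Complex.ofReal_cpow hx0, ← Complex.ofReal_cpow (by linarith : (0:ℝ) ≤ 1 - x),
        ← Complex.ofReal_mul]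
  rw [hint] at h
  have hG : Real.Gamma (b + c) ≠ 0 := (Real.Gamma_pos_of_pos (by linarith)).ne'
  have h2 : ((Real.Gamma b * Real.Gamma c : ℝ) : ℂ)
      = ((Real.Gamma (b + c) * ∫ s in (0:ℝ)..1, s ^ (b - 1) * (1 - s) ^ (c - 1) : ℝ) : ℂ) := by
    push_cast [← Complex.Gamma_ofReal]
    exact h
  have h3 := Complex.ofReal_injective h2
  rw [eq_div_iff hG]
  linarith [h3]


variable {x a b c α β : ℝ}

lemma integrable_aux (hx : 0 < x) (hα0 : 0 < α) (hα1 : α < 1) (hβ0 : 0 < β) (hβ1 : β < 1)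
    (ha : 0 ≤ a) (hab : a ≤ b) (hb : b ≤ x) :
    IntervalIntegrable (fun s => (x - s) ^ (-α) * (β * s ^ (β - 1))) volume a b := by
  have main : IntervalIntegrable (fun s => (x - s) ^ (-α) * (β * s ^ (β - 1))) volume 0 x := by
    have h1 : IntervalIntegrable (fun s => (x - s) ^ (-α) * (β * s ^ (β - 1))) volume 0 (x/2) := by
      have hg : IntervalIntegrable (fun s : ℝ => β * s ^ (β - 1)) volume 0 (x/2) :=
        (intervalIntegral.intervalIntegrable_rpow' (by linarith)).const_mul β
      refine hg.continuousOn_mul ?_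
      refine ContinuousOn.rpow_const (by fun_prop) fun s hs => Or.inl ?_
      rw [Set.uIcc_of_le (by linarith : (0:ℝ) ≤ x/2)] at hs
      have := hs.2
      intro hcon
      nlinarith [hs.1, hs.2]
    have h2 : IntervalIntegrable (fun s => (x - s) ^ (-α) * (β * s ^ (β - 1))) volume (x/2) x := by
      have hf : IntervalIntegrable (fun s : ℝ => (x - s) ^ (-α)) volume (x/2) x := by
        have := (intervalIntegral.intervalIntegrable_rpow'
          (a := x - x/2) (b := x - x) (r := -α) (by linarith)).comp_sub_left x
        simpa using this
      refine hf.mul_continuousOn ?_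
      refine ContinuousOn.mul continuousOn_const
        (ContinuousOn.rpow_const (by fun_prop) fun s hs => Or.inl ?_)
      rw [Set.uIcc_of_le (by linarith : x/2 ≤ x)] at hs
      nlinarith [hs.1, hs.2]
    exact h1.trans h2
  refine main.mono_set ?_
  rw [Set.uIcc_of_le (by linarith : (0:ℝ) ≤ x)]
  exact Set.uIcc_subset_Icc (Set.mem_Icc.mpr ⟨ha, by linarith⟩) (Set.mem_Icc.mpr ⟨by linarith, hb⟩)

lemma integral_pow_sub (hab : a ≤ b) (hbx : b ≤ x) (hα1 : α < 1) :
    ∫ s in a..b, (x - s) ^ (-α) = ((x - a) ^ (1-α) - (x - b) ^ (1-α)) / (1-α) := by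
  rw [intervalIntegral.integral_comp_sub_left (fun s => s ^ (-α)) x,
    integral_rpow (Or.inl (by linarith)), show -α + 1 = 1 - α by ring]

lemma integral_beta_pow (ha : 0 ≤ a) (hβ0 : 0 < β) :
    ∫ s in a..b, β * s ^ (β - 1) = b ^ β - a ^ β := by
  rw [intervalIntegral.integral_const_mul, integral_rpow (Or.inl (by linarith)),
    show β - 1 + 1 = β by ring, mul_div_cancel₀ _ hβ0.ne']


lemma beta_full (hx : 0 < x) (hα0 : 0 < α) (hα1 : α < 1) (hβ0 : 0 < β) (hβ1 : β < 1) :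
    ∫ s in (0:ℝ)..x, (x - s) ^ (-α) * (β * s ^ (β - 1))
      = Real.Gamma (1+β) / Real.Gamma (1+β-α) * Real.Gamma (1-α) * x ^ (β-α) := by
  have hsub : ∫ s in (0:ℝ)..x, (x - s) ^ (-α) * (β * s ^ (β - 1))
      = x • ∫ u in (0:ℝ)..1, (x - x*u) ^ (-α) * (β * (x*u) ^ (β - 1)) := by
    rw [intervalIntegral.integral_comp_mul_left
      (fun s => (x - s) ^ (-α) * (β * s ^ (β - 1))) hx.ne']
    rw [mul_zero, mul_one, smul_smul, mul_inv_cancel₀ hx.ne', one_smul]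
  rw [hsub]
  have hcong : ∫ u in (0:ℝ)..1, (x - x*u) ^ (-α) * (β * (x*u) ^ (β - 1))
      = ∫ u in (0:ℝ)..1, (β * x ^ (-α) * x^(β-1)) * (u ^ (β-1) * (1-u) ^ (-α)) := by
    refine intervalIntegral.integral_congr fun u hu => ?_
    rw [Set.uIcc_of_le (by norm_num : (0:ℝ) ≤ 1)] at hu
    have h1 : x - x*u = x * (1-u) := by ring
    rw [h1, Real.mul_rpow hx.le (by linarith [hu.2]), Real.mul_rpow hx.le hu.1]
    ring
  rw [hcong, intervalIntegral.integral_const_mul]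
  have hbeta : ∫ u in (0:ℝ)..1, u^(β-1) * (1-u)^(-α)
      = Real.Gamma β * Real.Gamma (1-α) / Real.Gamma (β + (1-α)) := by
    have := real_beta hβ0 (by linarith : (0:ℝ) < 1-α)
    rw [show (1:ℝ)-α-1 = -α by ring] at this
    exact this
  rw [hbeta, smul_eq_mul]
  have hpow : x * (x^(-α) * x^(β-1)) = x^(β-α) := by
    rw [← Real.rpow_add hx]
    nth_rewrite 1 [← Real.rpow_one x]
    rw [← Real.rpow_add hx, show (1:ℝ) + (-α + (β-1)) = β - α by ring]
  rw [show (1:ℝ)+β = β+1 by ring, Real.Gamma_add_one hβ0.ne',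
    show β+1-α = β+(1-α) by ring]
  have hG : Real.Gamma (β + (1-α)) ≠ 0 := (Real.Gamma_pos_of_pos (by linarith)).ne'
  field_simp
  linear_combination (Real.Gamma (1-α)) * hpow

lemma chebyshev_interval (hα0 : 0 < α) (hα1 : α < 1) (hβ0 : 0 < β) (hβ1 : β < 1)
    (ha : 0 ≤ a) (hab : a < b) (hbx : b ≤ x) :
    ∫ s in a..b, (x - s) ^ (-α) * (β * s ^ (β - 1))
      ≤ ((x - a) ^ (1-α) - (x - b) ^ (1-α)) / (1-α) * ((b ^ β - a ^ β)/(b - a)) := by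
  have hx : 0 < x := lt_of_le_of_lt ha hab |>.trans_le hbx
  set m : ℝ := (b ^ β - a ^ β)/(b - a) with hm_def
  obtain ⟨ξ, hξ, hderiv⟩ := exists_deriv_eq_slope (fun s => s ^ β) hab
    (ContinuousOn.rpow_const continuousOn_id fun s _ => Or.inr hβ0.le)
    (fun s hs => (Real.hasDerivAt_rpow_const
      (Or.inl (ne_of_gt (lt_of_le_of_lt ha hs.1)))).differentiableAt.differentiableWithinAt)
  have hξ0 : 0 < ξ := lt_of_le_of_lt ha hξ.1
  have hξx : ξ < x := lt_of_lt_of_le hξ.2 hbx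
  have hm : β * ξ ^ (β - 1) = m := by
    rw [← Real.deriv_rpow_const ξ β]
    exact hderiv
  set φ : ℝ → ℝ := fun s => m * (x - s) ^ (-α) + (x - ξ) ^ (-α) * (β * s ^ (β-1) - m)
    with hφ_def
  have hfint : IntervalIntegrable (fun s : ℝ => (x - s) ^ (-α)) volume a b := by
    have := (intervalIntegral.intervalIntegrable_rpow'
      (a := x - a) (b := x - b) (r := -α) (by linarith)).comp_sub_left x
    simpa using this
  have hgint : IntervalIntegrable (fun s : ℝ => β * s ^ (β-1)) volume a b :=
    (intervalIntegral.intervalIntegrable_rpow' (by linarith)).const_mul β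
  have hφint : IntervalIntegrable φ volume a b := by
    exact (hfint.const_mul m).add ((hgint.sub (intervalIntegrable_const)).const_mul _)
  have hFint : IntervalIntegrable (fun s => (x - s) ^ (-α) * (β * s ^ (β - 1))) volume a b :=
    integrable_aux hx hα0 hα1 hβ0 hβ1 ha hab.le hbx
  have hae : (fun s => (x - s) ^ (-α) * (β * s ^ (β - 1)))
      ≤ᵐ[volume.restrict (Set.Icc a b)] φ := by
    rw [← Measure.restrict_congr_set Ioo_ae_eq_Icc]
    refine (ae_restrict_iff' measurableSet_Ioo).mpr (ae_of_all _ fun s hs => ?_)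
    obtain ⟨hs1, hs2⟩ := hs
    have hs0 : 0 < s := lt_of_le_of_lt ha hs1
    have hsx : s < x := lt_of_lt_of_le hs2 hbx
    have key : ((x-s)^(-α) - (x-ξ)^(-α)) * (β * s^(β-1) - m) ≤ 0 := by
      rcases le_total s ξ with h | h
      · apply mul_nonpos_of_nonpos_of_nonneg
        · have := Real.rpow_le_rpow_of_nonpos (by linarith : 0 < x - ξ)
            (by linarith : x - ξ ≤ x - s) (by linarith : -α ≤ 0)
          linarith
        · have := Real.rpow_le_rpow_of_nonpos hs0 h (by linarith : β - 1 ≤ 0)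
          nlinarith [hm]
      · apply mul_nonpos_of_nonneg_of_nonpos
        · have := Real.rpow_le_rpow_of_nonpos (by linarith : 0 < x - s)
            (by linarith : x - s ≤ x - ξ) (by linarith : -α ≤ 0)
          linarith
        · have := Real.rpow_le_rpow_of_nonpos hξ0 h (by linarith : β - 1 ≤ 0)
          nlinarith [hm]
    simp only [hφ_def]
    nlinarith [key]
  have hint_le := intervalIntegral.integral_mono_ae_restrict hab.le hFint hφint hae
  have hφval : ∫ s in a..b, φ s
      = m * (((x-a)^(1-α) - (x-b)^(1-α))/(1-α)) := by
    rw [hφ_def]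
    rw [intervalIntegral.integral_add (hfint.const_mul m)
      ((hgint.sub (intervalIntegrable_const)).const_mul _),
      intervalIntegral.integral_const_mul, intervalIntegral.integral_const_mul,
      intervalIntegral.integral_sub hgint intervalIntegrable_const,
      intervalIntegral.integral_const, integral_pow_sub hab.le hbx hα1,
      integral_beta_pow ha hβ0, smul_eq_mul]
    have : b ^ β - a ^ β - (b - a) * m = 0 := by
      rw [hm_def, mul_comm (b-a), div_mul_cancel₀ _ (sub_ne_zero.mpr hab.ne'), sub_self]
    rw [this, mul_zero, add_zero]
  rw [hφval] at hint_le
  linarith [hint_le]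


section Discrete

variable {N : ℕ} {t : ℕ → ℝ}

lemma t_lt (hmono : ∀ j, j < N → t j < t (j+1)) {i j : ℕ} (hij : i < j) (hjN : j ≤ N) :
    t i < t j := by
  induction hij with
  | refl => exact hmono i (by omega)
  | @step m h ih => exact (ih (by omega)).trans (hmono m (by omega))

lemma t_le (hmono : ∀ j, j < N → t j < t (j+1)) {i j : ℕ} (hij : i ≤ j) (hjN : j ≤ N) :
    t i ≤ t j := by
  rcases eq_or_lt_of_le hij with h | h
  · rw [h]
  · exact (t_lt hmono h hjN).le

lemma t_pos (ht0 : t 0 = 0) (hmono : ∀ j, j < N → t j < t (j+1)) {j : ℕ}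
    (hj : 1 ≤ j) (hjN : j ≤ N) : 0 < t j := by
  rw [← ht0]; exact t_lt hmono hj hjN

lemma t_nonneg (ht0 : t 0 = 0) (hmono : ∀ j, j < N → t j < t (j+1)) {j : ℕ}
    (hjN : j ≤ N) : 0 ≤ t j := by
  rw [← ht0]; exact t_le hmono (Nat.zero_le j) hjN

lemma Kd_eq (α : ℝ) (t : ℕ → ℝ) (j k : ℕ) :
    Kd α t j k = ((t j - t (k-1)) ^ (1-α) - (t j - t k) ^ (1-α))
      / (Real.Gamma (2-α) * (t k - t (k-1))) := by
  unfold Kd kker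
  rw [show (2:ℝ)-α-1 = 1-α by ring, div_sub_div_same, div_div]

lemma Gamma2_pos {α : ℝ} (hα1 : α < 1) : 0 < Real.Gamma (2-α) :=
  Real.Gamma_pos_of_pos (by linarith)

lemma Kd_pos {α : ℝ} (hα1 : α < 1) (hmono : ∀ j, j < N → t j < t (j+1))
    {j k : ℕ} (hk : 1 ≤ k) (hkj : k ≤ j) (hjN : j ≤ N) : 0 < Kd α t j k := by
  rw [Kd_eq]
  apply div_pos
  · rw [sub_pos]
    apply Real.rpow_lt_rpow (sub_nonneg.mpr (t_le hmono hkj hjN)) _ (by linarith)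
    have : t (k-1) < t k := t_lt hmono (by omega) (by omega)
    linarith
  · exact mul_pos (Gamma2_pos hα1) (by
      have : t (k-1) < t k := t_lt hmono (by omega) (by omega)
      linarith)

lemma Kd_mono {α : ℝ} (hα0 : 0 < α) (hα1 : α < 1) (hmono : ∀ j, j < N → t j < t (j+1))
    {j k : ℕ} (hk : 1 ≤ k) (hkj : k + 1 ≤ j) (hjN : j ≤ N) :
    Kd α t j k ≤ Kd α t j (k+1) := by
  have hxz : t (k+1) ≤ t j := t_le hmono hkj hjN
  have hxy : t k < t (k+1) := t_lt hmono (by omega) (by omega)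
  have hyz : t (k-1) < t k := t_lt hmono (by omega) (by omega)
  have hcc := (Real.concaveOn_rpow (by linarith : (0:ℝ) ≤ 1-α)
      (by linarith : (1:ℝ)-α ≤ 1)).slope_anti_adjacent
    (x := t j - t (k+1)) (y := t j - t k) (z := t j - t (k-1))
    (Set.mem_Ici.mpr (by linarith)) (Set.mem_Ici.mpr (by linarith))
    (by linarith) (by linarith)
  rw [Kd_eq, Kd_eq, Nat.add_sub_cancel]
  rw [mul_comm (Real.Gamma (2-α)), mul_comm (Real.Gamma (2-α)), ← div_div, ← div_div]
  have h2 : ((t j - t (k-1)) ^ (1-α) - (t j - t k) ^ (1-α)) / (t k - t (k-1))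
      ≤ ((t j - t k) ^ (1-α) - (t j - t (k+1)) ^ (1-α)) / (t (k+1) - t k) := by
    rw [show t k - t (k-1) = t j - t (k-1) - (t j - t k) by ring,
      show t (k+1) - t k = t j - t k - (t j - t (k+1)) by ring]
    exact hcc
  gcongr
  exact (Gamma2_pos hα1).le

lemma Pd_diag (α : ℝ) (t : ℕ → ℝ) (n : ℕ) : Pd α t n n = 1 / Kd α t n n := by
  rw [Pd, if_pos rfl]

lemma Pd_lt {α : ℝ} {t : ℕ → ℝ} {n i : ℕ} (h : i < n) :
    Pd α t n i = (1 / Kd α t i i) *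
      ∑ j ∈ Finset.Ioc i n, Pd α t n j * (Kd α t j (i+1) - Kd α t j i) := by
  rw [Pd, if_neg h.ne]
  congr 1
  exact Finset.sum_attach (Finset.Ioc i n)
    (fun j => Pd α t n j * (Kd α t j (i+1) - Kd α t j i))

lemma Pd_nonneg {α : ℝ} (hα0 : 0 < α) (hα1 : α < 1)
    (hmono : ∀ j, j < N → t j < t (j+1)) {n : ℕ} (hn : n ≤ N)
    (i : ℕ) (h1 : 1 ≤ i) (h2 : i ≤ n) : 0 ≤ Pd α t n i := by
  rcases eq_or_lt_of_le h2 with h | h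
  · subst h
    rw [Pd_diag]
    exact (one_div_nonneg).mpr (Kd_pos hα1 hmono h1 le_rfl hn).le
  · rw [Pd_lt h]
    apply mul_nonneg ((one_div_nonneg).mpr (Kd_pos hα1 hmono h1 le_rfl (by omega)).le)
    apply Finset.sum_nonneg
    intro j hj
    have hj' := Finset.mem_Ioc.mp hj
    have hrec := Pd_nonneg hα0 hα1 hmono hn j (by omega) hj'.2
    exact mul_nonneg hrec (sub_nonneg.mpr
      (Kd_mono hα0 hα1 hmono h1 (by omega) (by omega)))
termination_by n - i
decreasing_by omega

lemma Pd_sum {α : ℝ} (hα0 : 0 < α) (hα1 : α < 1)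
    (hmono : ∀ j, j < N → t j < t (j+1)) {n : ℕ} (hn : n ≤ N)
    (i : ℕ) (h1 : 1 ≤ i) (h2 : i ≤ n) :
    ∑ j ∈ Finset.Icc i n, Pd α t n j * Kd α t j i = 1 := by
  have hKii : Kd α t i i ≠ 0 := (Kd_pos hα1 hmono h1 le_rfl (by omega)).ne'
  rcases eq_or_lt_of_le h2 with h | h
  · subst h
    rw [Finset.Icc_self, Finset.sum_singleton, Pd_diag, one_div, inv_mul_cancel₀ hKii]
  · have hsplit : Finset.Icc i n = insert i (Finset.Ioc i n) := (Finset.Ioc_insert_left h2).symm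
    rw [hsplit, Finset.sum_insert (by simp)]
    rw [Pd_lt h]
    have hcancel : (1 / Kd α t i i * ∑ j ∈ Finset.Ioc i n,
          Pd α t n j * (Kd α t j (i+1) - Kd α t j i)) * Kd α t i i
        = ∑ j ∈ Finset.Ioc i n, Pd α t n j * (Kd α t j (i+1) - Kd α t j i) := by
      field_simp
    rw [hcancel, ← Finset.sum_add_distrib]
    rw [Finset.sum_congr rfl (fun j _ => by ring :
      ∀ j ∈ Finset.Ioc i n, Pd α t n j * (Kd α t j (i+1) - Kd α t j i)
        + Pd α t n j * Kd α t j i = Pd α t n j * Kd α t j (i+1))]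
    rw [← Finset.Icc_add_one_left_eq_Ioc]
    exact Pd_sum hα0 hα1 hmono hn (i+1) (by omega) h
termination_by n - i
decreasing_by omega


lemma per_j {α β : ℝ} (hα0 : 0 < α) (hα1 : α < 1) (hβ0 : 0 < β) (hβ1 : β < 1)
    (ht0 : t 0 = 0) (hmono : ∀ j, j < N → t j < t (j+1))
    (j : ℕ) (hj1 : 1 ≤ j) (hjN : j ≤ N) :
    Real.Gamma (1+β) / Real.Gamma (1+β-α) * t j ^ (β-α)
      ≤ ∑ k ∈ Finset.Icc 1 j, Kd α t j k * (t k ^ β - t (k-1) ^ β) := by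
  have htj : 0 < t j := t_pos ht0 hmono hj1 hjN
  have hΓ : 0 < Real.Gamma (1-α) := Real.Gamma_pos_of_pos (by linarith)
  have hΓ' : Real.Gamma (1-α) ≠ 0 := hΓ.ne'
  have hI := beta_full (x := t j) htj hα0 hα1 hβ0 hβ1
  have hsplit : ∫ s in (0:ℝ)..t j, (t j - s) ^ (-α) * (β * s ^ (β-1))
      = ∑ k ∈ Finset.range j, ∫ s in t k..t (k+1), (t j - s) ^ (-α) * (β * s ^ (β-1)) := by
    rw [intervalIntegral.sum_integral_adjacent_intervals (fun k hk =>
      integrable_aux htj hα0 hα1 hβ0 hβ1 (t_nonneg ht0 hmono (by omega))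
        (t_lt hmono (by omega) (by omega)).le (t_le hmono (by omega) hjN)), ht0]
  have hbound : ∀ k ∈ Finset.range j,
      ∫ s in t k..t (k+1), (t j - s) ^ (-α) * (β * s ^ (β-1))
        ≤ Real.Gamma (1-α) * (Kd α t j (k+1) * (t (k+1) ^ β - t k ^ β)) := by
    intro k hk
    have hk' := Finset.mem_range.mp hk
    have hch := chebyshev_interval (x := t j) hα0 hα1 hβ0 hβ1
      (t_nonneg ht0 hmono (show k ≤ N by omega))
      (t_lt hmono (show k < k+1 by omega) (show k+1 ≤ N by omega))
      (t_le hmono (show k+1 ≤ j by omega) hjN)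
    refine hch.trans_eq ?_
    rw [Kd_eq, Nat.add_sub_cancel]
    have h2α : Real.Gamma (2-α) = (1-α) * Real.Gamma (1-α) := by
      rw [show (2:ℝ)-α = (1-α)+1 by ring,
        Real.Gamma_add_one (by linarith : (1:ℝ)-α ≠ 0)]
    have hne1 : (1:ℝ) - α ≠ 0 := by linarith
    have hne2 : t (k+1) - t k ≠ 0 :=
      (sub_pos.mpr (t_lt hmono (by omega) (by omega))).ne'
    rw [h2α]
    field_simp
  calc Real.Gamma (1+β) / Real.Gamma (1+β-α) * t j ^ (β-α)
      = (1 / Real.Gamma (1-α)) *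
        ∫ s in (0:ℝ)..t j, (t j - s) ^ (-α) * (β * s ^ (β-1)) := by
        rw [hI]
        field_simp
    _ = (1 / Real.Gamma (1-α)) * ∑ k ∈ Finset.range j,
          ∫ s in t k..t (k+1), (t j - s) ^ (-α) * (β * s ^ (β-1)) := by rw [hsplit]
    _ ≤ (1 / Real.Gamma (1-α)) * ∑ k ∈ Finset.range j,
          Real.Gamma (1-α) * (Kd α t j (k+1) * (t (k+1) ^ β - t k ^ β)) := by
        exact mul_le_mul_of_nonneg_left (Finset.sum_le_sum hbound)
          ((one_div_nonneg).mpr hΓ.le)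
    _ = ∑ k ∈ Finset.range j, Kd α t j (k+1) * (t (k+1) ^ β - t k ^ β) := by
        rw [Finset.mul_sum]
        refine Finset.sum_congr rfl fun k _ => ?_
        field_simp
    _ = ∑ k ∈ Finset.Icc 1 j, Kd α t j k * (t k ^ β - t (k-1) ^ β) := by
        rw [← Finset.Ico_add_one_right_eq_Icc, Finset.sum_Ico_eq_sum_range]
        refine Finset.sum_congr (by norm_num) fun k _ => ?_
        rw [add_comm 1 k, Nat.add_sub_cancel]

end Discrete

end CKWPB

/-- Lemma 3.2(e): `Σ_{j=1}^{n} P^{n,j}_α t_j^{β-α} ≤ (Γ(1+β-α)/Γ(1+β)) t_n^β`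
for every `β ∈ (0,1)` and `1 ≤ n ≤ N`. -/
theorem complementary_kernel_weighted_power_bound
    (α T : ℝ) (N : ℕ) (t : ℕ → ℝ)
    (hα0 : 0 < α) (hα1 : α < 1) (hT : 0 < T)
    (ht0 : t 0 = 0) (htN : t N = T)
    (hmono : ∀ j, j < N → t j < t (j + 1)) :
    ∀ β : ℝ, 0 < β → β < 1 → ∀ n, 1 ≤ n → n ≤ N →
      ∑ j ∈ Finset.Icc 1 n, Pd α t n j * t j ^ (β - α)
        ≤ (Real.Gamma (1 + β - α) / Real.Gamma (1 + β)) * t n ^ β := by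
  intro β hβ0 hβ1 n hn1 hnN
  set c : ℝ := Real.Gamma (1+β) / Real.Gamma (1+β-α) with hc_def
  have hc : 0 < c := div_pos (Real.Gamma_pos_of_pos (by linarith))
    (Real.Gamma_pos_of_pos (by linarith))
  have hstep : c * ∑ j ∈ Finset.Icc 1 n, Pd α t n j * t j ^ (β-α) ≤ t n ^ β := by
    calc c * ∑ j ∈ Finset.Icc 1 n, Pd α t n j * t j ^ (β-α)
        = ∑ j ∈ Finset.Icc 1 n, Pd α t n j * (c * t j ^ (β-α)) := by
          rw [Finset.mul_sum]; exact Finset.sum_congr rfl fun j _ => by ring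
      _ ≤ ∑ j ∈ Finset.Icc 1 n, Pd α t n j *
            (∑ k ∈ Finset.Icc 1 j, Kd α t j k * (t k ^ β - t (k-1) ^ β)) := by
          refine Finset.sum_le_sum fun j hj => ?_
          obtain ⟨hj1, hj2⟩ := Finset.mem_Icc.mp hj
          exact mul_le_mul_of_nonneg_left
            (CKWPB.per_j hα0 hα1 hβ0 hβ1 ht0 hmono j hj1 (hj2.trans hnN))
            (CKWPB.Pd_nonneg hα0 hα1 hmono hnN j hj1 hj2)
      _ = ∑ j ∈ Finset.Icc 1 n, ∑ k ∈ Finset.Icc 1 j,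
            Pd α t n j * (Kd α t j k * (t k ^ β - t (k-1) ^ β)) := by
          exact Finset.sum_congr rfl fun j _ => Finset.mul_sum _ _ _
      _ = ∑ k ∈ Finset.Icc 1 n, ∑ j ∈ Finset.Icc k n,
            Pd α t n j * (Kd α t j k * (t k ^ β - t (k-1) ^ β)) := by
          refine Finset.sum_comm' fun j k => ?_
          simp only [Finset.mem_Icc]
          omega
      _ = ∑ k ∈ Finset.Icc 1 n,
            (∑ j ∈ Finset.Icc k n, Pd α t n j * Kd α t j k) * (t k ^ β - t (k-1) ^ β) := by
          refine Finset.sum_congr rfl fun k _ => ?_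
          rw [Finset.sum_mul]
          exact Finset.sum_congr rfl fun j _ => by ring
      _ = ∑ k ∈ Finset.Icc 1 n, (t k ^ β - t (k-1) ^ β) := by
          refine Finset.sum_congr rfl fun k hk => ?_
          obtain ⟨hk1, hk2⟩ := Finset.mem_Icc.mp hk
          rw [CKWPB.Pd_sum hα0 hα1 hmono hnN k hk1 hk2, one_mul]
      _ = t n ^ β := by
          rw [← Finset.Ico_add_one_right_eq_Icc, Finset.sum_Ico_eq_sum_range]
          have : ∑ k ∈ Finset.range (n+1-1), (t (1+k) ^ β - t (1+k-1) ^ β)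
              = ∑ k ∈ Finset.range n, (t (k+1) ^ β - t k ^ β) := by
            refine Finset.sum_congr (by norm_num) fun k _ => ?_
            rw [add_comm 1 k, Nat.add_sub_cancel]
          rw [this, Finset.sum_range_sub (fun k => t k ^ β), ht0,
            Real.zero_rpow hβ0.ne', sub_zero]
  have hcinv : Real.Gamma (1+β-α) / Real.Gamma (1+β) = c⁻¹ := by
    rw [hc_def, inv_div]
  rw [hcinv]
  calc ∑ j ∈ Finset.Icc 1 n, Pd α t n j * t j ^ (β-α)
      = c⁻¹ * (c * ∑ j ∈ Finset.Icc 1 n, Pd α t n j * t j ^ (β-α)) := by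
        rw [← mul_assoc, inv_mul_cancel₀ hc.ne', one_mul]
    _ ≤ c⁻¹ * t n ^ β := mul_le_mul_of_nonneg_left hstep (inv_nonneg.mpr hc.le)
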